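/- Any two involutions in PSL₂(𝔽_q), for q ≥ 5 a prime power, are conjugate in PSL₂(𝔽_q) when q is even, and are conjugate in PGL₂(𝔽_q) in general; in particular there is a single PSL₂(𝔽_q)-conjugacy class of involutions. -/

import Mathlib

open Matrix
open scoped MatrixGroups

variable {F : Type} [Field F]

local notation "SL2" => Matrix.SpecialLinearGroup (Fin 2) F
local notation "M2" => Matrix (Fin 2) (Fin 2) F

namespace Aux13

def mk2 (a b c d : F) (h : a * d - b * c = 1) : SL2 :=
  ⟨!![a, b; c, d], by simp [Matrix.det_fin_two_of, h]⟩

lemma isConj_of_mul_eq (s g h : SL2)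
    (H : (s : M2) * (g : M2) = (h : M2) * (s : M2)) : IsConj g h := by
  have hs : s * g = h * s := Subtype.ext H
  exact isConj_iff.mpr ⟨s, by rw [hs, mul_inv_cancel_right]⟩

def Cm : SL2 := mk2 0 (-1) 1 0 (by ring)

def Mm (d : F) (hd : d ≠ 0) : SL2 := mk2 0 (-d) d⁻¹ 0 (by field_simp; ring)

lemma ff_sq_add_sq (F : Type) [Field F] [Fintype F] (x : F) : ∃ a b : F, a^2 + b^2 = x := by
  rcases Nat.even_or_odd (Fintype.card F) with he | ho
  · have h2 : ringChar F = 2 := FiniteField.even_card_iff_char_two.mpr (Nat.even_iff.mp he)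
    obtain ⟨r, hr⟩ := FiniteField.isSquare_of_char_two h2 x
    exact ⟨r, 0, by rw [hr]; ring⟩
  · classical
    obtain ⟨a, b, hab⟩ := FiniteField.exists_root_sum_quadratic
      (f := (Polynomial.X ^ 2 : Polynomial F)) (g := (Polynomial.X ^ 2 - Polynomial.C x))
      (by simp) (by rw [Polynomial.degree_X_pow_sub_C (by norm_num) x]; rfl)
      (Nat.odd_iff.mp ho)
    refine ⟨a, b, ?_⟩
    simp only [Polynomial.eval_pow, Polynomial.eval_X, Polynomial.eval_sub,
      Polynomial.eval_C] at hab
    linear_combination hab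

lemma conj_M (x y d : F) (hd : d ≠ 0) (hdet : x^2 * d + y^2 * d⁻¹ = 1) :
    IsConj (Cm : SL2) (Mm d hd) := by
  refine (isConj_of_mul_eq (mk2 x y (-y * d⁻¹) (x * d) (by linear_combination hdet))
    (Mm d hd) Cm ?_).symm
  show !![x, y; -y * d⁻¹, x * d] * !![0, -d; d⁻¹, 0]
      = !![(0:F), -1; 1, 0] * !![x, y; -y * d⁻¹, x * d]
  rw [Matrix.mul_fin_two, Matrix.mul_fin_two]
  field_simp
  ring_nf

lemma conj_M' [Fintype F] (d : F) (hd : d ≠ 0) : IsConj (Cm : SL2) (Mm d hd) := by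
  obtain ⟨a, b, hab⟩ := ff_sq_add_sq F d
  refine conj_M (a * d⁻¹) b d hd ?_
  field_simp
  linear_combination hab

lemma conj_cne [Fintype F] (g : SL2) (ht : Matrix.trace (g : M2) = 0)
    (hc : (g : M2) 1 0 ≠ 0) : IsConj (Cm : SL2) g := by
  obtain ⟨a, b, c, d, hg⟩ : ∃ a b c d, (g : M2) = !![a, b; c, d] :=
    ⟨_, _, _, _, Matrix.eta_fin_two _⟩
  rw [hg, Matrix.trace_fin_two_of] at ht
  have hc' : c ≠ 0 := by
    rw [hg] at hc; simpa using hc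
  have hd : d = -a := by linear_combination ht
  subst hd
  have hdet : a * (-a) - b * c = 1 := by
    have h2 := g.prop
    rw [hg, Matrix.det_fin_two_of] at h2
    exact h2
  refine (conj_M' c⁻¹ (inv_ne_zero hc')).trans ?_
  refine (isConj_of_mul_eq (mk2 1 (-a * c⁻¹) 0 1 (by ring)) g (Mm c⁻¹ (inv_ne_zero hc')) ?_).symm
  rw [hg]
  show !![1, -a * c⁻¹; 0, 1] * !![a, b; c, -a]
      = !![0, -c⁻¹; (c⁻¹)⁻¹, 0] * !![1, -a * c⁻¹; 0, 1]
  rw [Matrix.mul_fin_two, Matrix.mul_fin_two, inv_inv]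
  ext i j
  fin_cases i <;> fin_cases j <;> simp <;> field_simp <;>
    first
      | ring1
      | linear_combination hdet
      | linear_combination (-1 : F) * hdet

lemma conj_C [Fintype F] (g : SL2) (ht : Matrix.trace (g : M2) = 0)
    (h1 : (g : M2) ≠ 1) : IsConj (Cm : SL2) g := by
  obtain ⟨a, b, c, d, hg⟩ : ∃ a b c d, (g : M2) = !![a, b; c, d] :=
    ⟨_, _, _, _, Matrix.eta_fin_two _⟩
  rw [hg, Matrix.trace_fin_two_of] at ht
  have hd : d = -a := by linear_combination ht
  subst hd
  have hdet : a * (-a) - b * c = 1 := by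
    have h2 := g.prop
    rw [hg, Matrix.det_fin_two_of] at h2
    exact h2
  by_cases hc : c = 0
  case neg =>
    refine conj_cne g ?_ ?_
    · rw [hg, Matrix.trace_fin_two_of]; ring
    · rw [hg]; simpa using hc
  by_cases hb0 : b = 0
  case neg =>
    -- conjugate by Cm to swap
    set g' : SL2 := mk2 (-a) 0 (-b) a (by linear_combination hdet + b * hc) with hg'
    have h2' : IsConj g g' := by
      refine isConj_of_mul_eq Cm g g' ?_
      rw [hg, hc]
      show !![(0:F), -1; 1, 0] * !![a, b; 0, -a] = !![-a, 0; -b, a] * !![(0:F), -1; 1, 0]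
      rw [Matrix.mul_fin_two, Matrix.mul_fin_two]
      ext i j
      fin_cases i <;> fin_cases j <;> ring
    have h1' : IsConj (Cm : SL2) g' := by
      refine conj_cne g' ?_ ?_
      · show Matrix.trace !![(-a), 0; (-b), a] = 0
        rw [Matrix.trace_fin_two]
        simp
      · show !![(-a), 0; (-b), a] 1 0 ≠ 0
        simpa using hb0
    exact h1'.trans h2'.symm
  case pos =>
    have ha0 : a ≠ 0 := by
      intro h0
      have := hdet
      rw [h0, hc, hb0] at this
      simp at this
    have h2a : 2 * a ≠ 0 := by
      intro h2
      rcases mul_eq_zero.mp h2 with h20 | h20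
      · -- char 2 : show g = 1
        have hA : (a - 1)^2 = 0 := by
          linear_combination (-1 : F) * hdet + (-b) * hc + (-1) * h2
        have ha1 : a = 1 := by
          have h' := sq_eq_zero_iff.mp hA
          linear_combination h'
        refine absurd ?_ h1
        rw [hg, hb0, hc, ha1, Matrix.one_fin_two]
        ext i j
        fin_cases i <;> fin_cases j <;> simp <;> linear_combination -h20
      · exact ha0 h20
    set g' : SL2 := mk2 a 0 (2*a) (-a) (by linear_combination hdet + b * hc) with hg'
    have h2' : IsConj g g' := by
      refine isConj_of_mul_eq (mk2 1 0 1 1 (by ring)) g g' ?_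
      rw [hg, hc, hb0]
      show !![(1:F), 0; 1, 1] * !![a, 0; 0, -a] = !![a, 0; 2*a, -a] * !![(1:F), 0; 1, 1]
      rw [Matrix.mul_fin_two, Matrix.mul_fin_two]
      ext i j
      fin_cases i <;> fin_cases j <;> ring
    have h1' : IsConj (Cm : SL2) g' := by
      refine conj_cne g' ?_ ?_
      · show Matrix.trace !![a, 0; 2*a, -a] = 0
        rw [Matrix.trace_fin_two]
        simp
      · show !![a, 0; 2*a, -a] 1 0 ≠ 0
        simpa using h2a
    exact h1'.trans h2'.symm


lemma central_conds (g : SL2) (h2 : g ^ 2 ∈ Subgroup.center (Matrix.SpecialLinearGroup (Fin 2) F))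
    (hn : g ∉ Subgroup.center (Matrix.SpecialLinearGroup (Fin 2) F)) :
    Matrix.trace (g : M2) = 0 ∧ (g : M2) ≠ 1 := by
  constructor
  case right =>
    intro h
    exact hn (by rw [show g = 1 from Subtype.ext h]; exact Subgroup.one_mem _)
  obtain ⟨r, hr2, hr⟩ := Matrix.SpecialLinearGroup.mem_center_iff.mp h2
  rw [Fintype.card_fin] at hr2
  obtain ⟨a, b, c, d, hg⟩ : ∃ a b c d, (g : M2) = !![a, b; c, d] :=
    ⟨_, _, _, _, Matrix.eta_fin_two _⟩
  have hsc : (Matrix.scalar (Fin 2) r) = !![r, 0; 0, r] := by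
    ext i j
    fin_cases i <;> fin_cases j <;>
      simp [Matrix.scalar_apply, Matrix.diagonal_apply]
  have hgg : ((g ^ 2 : SL2) : M2) = !![a*a + b*c, a*b + b*d; c*a + d*c, c*b + d*d] := by
    rw [sq, Matrix.SpecialLinearGroup.coe_mul, hg, Matrix.mul_fin_two]
  rw [hgg, hsc] at hr
  have e00 : r = a*a + b*c := congr_fun (congr_fun hr 0) 0
  have e01 : (0:F) = a*b + b*d := congr_fun (congr_fun hr 0) 1
  have e10 : (0:F) = c*a + d*c := congr_fun (congr_fun hr 1) 0
  have e11 : r = c*b + d*d := congr_fun (congr_fun hr 1) 1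
  have hdet : a * d - b * c = 1 := by
    have hp := g.prop
    rw [hg, Matrix.det_fin_two_of] at hp
    exact hp
  rw [hg, Matrix.trace_fin_two_of]
  by_contra htne
  have hb : b = 0 := by
    rcases mul_eq_zero.mp (show b * (a + d) = 0 by linear_combination -e01) with h | h
    · exact h
    · exact absurd h htne
  have hc : c = 0 := by
    rcases mul_eq_zero.mp (show c * (a + d) = 0 by linear_combination -e10) with h | h
    · exact h
    · exact absurd h htne
  have had : a = d := by
    rcases mul_eq_zero.mp (show (a - d) * (a + d) = 0 by
      linear_combination e11 - e00) with h | h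
    · linear_combination h
    · exact absurd h htne
  refine hn (Matrix.SpecialLinearGroup.mem_center_iff.mpr ⟨a, ?_, ?_⟩)
  · rw [Fintype.card_fin]
    linear_combination hdet + b * hc + a * had
  · have hsca : (Matrix.scalar (Fin 2)) a = !![a, 0; 0, a] := by
      ext i j
      fin_cases i <;> fin_cases j <;>
        simp [Matrix.scalar_apply, Matrix.diagonal_apply]
    rw [hsca, hg, hb, hc, ← had]

lemma involution_conj [Fintype F] (g h : SL2)
    (hg2 : g ^ 2 ∈ Subgroup.center (Matrix.SpecialLinearGroup (Fin 2) F))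
    (hgn : g ∉ Subgroup.center (Matrix.SpecialLinearGroup (Fin 2) F))
    (hh2 : h ^ 2 ∈ Subgroup.center (Matrix.SpecialLinearGroup (Fin 2) F))
    (hhn : h ∉ Subgroup.center (Matrix.SpecialLinearGroup (Fin 2) F)) :
    IsConj g h := by
  obtain ⟨htg, h1g⟩ := central_conds g hg2 hgn
  obtain ⟨hth, h1h⟩ := central_conds h hh2 hhn
  exact (conj_C g htg h1g).symm.trans (conj_C h hth h1h)

lemma order_two_conds [Fintype F] (hchar2 : (2 : F) = 0) (g : SL2) (hg : orderOf g = 2) :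
    g ^ 2 ∈ Subgroup.center (Matrix.SpecialLinearGroup (Fin 2) F) ∧
    g ∉ Subgroup.center (Matrix.SpecialLinearGroup (Fin 2) F) := by
  have hg2 : g ^ 2 = 1 := by
    have h' := pow_orderOf_eq_one g
    rwa [hg] at h'
  have hgne : g ≠ 1 := by
    intro e; rw [e, orderOf_one] at hg; norm_num at hg
  refine ⟨by rw [hg2]; exact Subgroup.one_mem _, ?_⟩
  intro hmem
  obtain ⟨r, hr2, hr⟩ := Matrix.SpecialLinearGroup.mem_center_iff.mp hmem
  rw [Fintype.card_fin] at hr2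
  have hr1 : r = 1 := by
    have h0 : (r - 1) ^ 2 = 0 := by linear_combination hr2 + (1 - r) * hchar2
    have := sq_eq_zero_iff.mp h0
    linear_combination this
  refine hgne (Subtype.ext ?_)
  rw [← hr, hr1]
  simp

lemma psl_order_two_conds (g : SL2)
    (hg : orderOf ((g : PSL(2, F))) = 2) :
    g ^ 2 ∈ Subgroup.center (Matrix.SpecialLinearGroup (Fin 2) F) ∧
    g ∉ Subgroup.center (Matrix.SpecialLinearGroup (Fin 2) F) := by
  constructor
  · rw [← QuotientGroup.eq_one_iff]
    show ((g : PSL(2, F))) ^ 2 = 1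
    have h' := pow_orderOf_eq_one ((g : PSL(2, F)))
    rwa [hg] at h'
  · intro hmem
    have h1 : (g : PSL(2, F)) = 1 := QuotientGroup.eq_one_iff g |>.mpr hmem
    rw [h1, orderOf_one] at hg
    norm_num at hg

end Aux13

open Aux13 in
theorem stmt13 (p f q : ℕ) (hp : p.Prime) (hf : 1 ≤ f) (hq : q = p ^ f)
    (hq5 : 5 ≤ q) (F : Type) [Field F] [Fintype F] (hcard : Fintype.card F = q) :
    let ψ : SL(2, F) →* (GL (Fin 2) F ⧸ Subgroup.center (GL (Fin 2) F)) :=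
      (QuotientGroup.mk' _).comp (Matrix.SpecialLinearGroup.toGL)
    (q % 2 = 0 → ∀ g h : SL(2, F), orderOf g = 2 → orderOf h = 2 → IsConj g h) ∧
    (∀ g h : SL(2, F), orderOf ((g : PSL(2, F))) = 2 → orderOf ((h : PSL(2, F))) = 2 →
      IsConj (ψ g) (ψ h)) ∧
    (∀ g h : PSL(2, F), orderOf g = 2 → orderOf h = 2 → IsConj g h) := by
  intro ψ
  refine ⟨?_, ?_, ?_⟩
  · intro h2q g h hg hh
    have hchar : ringChar F = 2 :=
      FiniteField.even_card_iff_char_two.mpr (by rw [hcard]; exact h2q)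
    have h2F : (2 : F) = 0 := by
      haveI : CharP F 2 := hchar ▸ ringChar.charP F
      exact_mod_cast CharP.cast_eq_zero F 2
    obtain ⟨hg2, hgn⟩ := order_two_conds h2F g hg
    obtain ⟨hh2, hhn⟩ := order_two_conds h2F h hh
    exact involution_conj g h hg2 hgn hh2 hhn
  · intro g h hg hh
    obtain ⟨hg2, hgn⟩ := psl_order_two_conds g hg
    obtain ⟨hh2, hhn⟩ := psl_order_two_conds h hh
    exact ψ.map_isConj (involution_conj g h hg2 hgn hh2 hhn)
  · intro g h hg hh
    obtain ⟨g', rfl⟩ := QuotientGroup.mk_surjective g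
    obtain ⟨h', rfl⟩ := QuotientGroup.mk_surjective h
    obtain ⟨hg2, hgn⟩ := psl_order_two_conds g' hg
    obtain ⟨hh2, hhn⟩ := psl_order_two_conds h' hh
    exact (QuotientGroup.mk' (Subgroup.center (Matrix.SpecialLinearGroup (Fin 2) F))).map_isConj
      (involution_conj g' h' hg2 hgn hh2 hhn)
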